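/- Cauchy–Schwarz–Gowers inequality for box norms (first part of Lemma 2.14 of the paper): Let G be a finite abelian group, ℓ ≥ 1, let H₁, …, H_ℓ be nonempty subsets of G, and for each ω ∈ {0,1}^ℓ let f_ω : G → ℂ. Then |⟨(f_ω)_{ω∈{0,1}^ℓ}⟩_{H₁,…,H_ℓ}| ≤ Π_{ω∈{0,1}^ℓ} ‖f_ω‖_{U(H₁,…,H_ℓ)}, where ⟨(f_ω)_{ω}⟩_{H₁,…,H_ℓ} = 𝔼_{x∈G} 𝔼_{h₁,h₁'∈H₁} ⋯ 𝔼_{h_ℓ,h_ℓ'∈H_ℓ} Π_{ω∈{0,1}^ℓ} 𝒞^{|ω|} f_ω(x + Σ_{i=1}^ℓ ω_i (h_i − h_i') + h₁' + ⋯ + h_ℓ'), 𝒞 denotes complex conjugation and |ω| = Σ_i ω_i. -/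

import Mathlib

open scoped BigOperators

/-- `conjIter n z` applies complex conjugation `n` times to `z`, i.e. it is `𝒞^n z`. -/
def conjIter (n : ℕ) (z : ℂ) : ℂ := (starRingEnd ℂ)^[n] z

/-- The iterated multiplicative derivative
`Δ_{(h₁,h₁')}(Δ_{(h₂,h₂')}(⋯(Δ_{(h_ℓ,h_ℓ')} f)⋯))`, where
`Δ_{(h,h')} f (x) = conj (f (x + h')) * f (x + h)`. -/
def boxDeriv {G : Type*} [AddCommGroup G] : List (G × G) → (G → ℂ) → (G → ℂ)
  | [], f => f
  | (h, h') :: rest, f => fun x =>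
      (starRingEnd ℂ) (boxDeriv rest f (x + h')) * boxDeriv rest f (x + h)

/-- The average `𝔼_{x∈G} 𝔼_{h₁,h₁'∈H₁} ⋯ 𝔼_{h_ℓ,h_ℓ'∈H_ℓ}
Δ_{(h₁,h₁'),…,(h_ℓ,h_ℓ')} f (x)` defining the box norm. -/
noncomputable def boxAvg {G : Type*} [AddCommGroup G] [Fintype G]
    {ℓ : ℕ} (H : Fin ℓ → Finset G) (f : G → ℂ) : ℂ :=
  (∑ x : G, ∑ h ∈ Fintype.piFinset H, ∑ h' ∈ Fintype.piFinset H,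
      boxDeriv (List.ofFn fun i => (h i, h' i)) f x) /
    ((Fintype.card G : ℂ) * ((Fintype.piFinset H).card : ℂ) ^ 2)

/-- The box norm `‖f‖_{U(H₁,…,H_ℓ)}`, the `2^ℓ`-th root of the box average. -/
noncomputable def boxNorm {G : Type*} [AddCommGroup G] [Fintype G]
    {ℓ : ℕ} (H : Fin ℓ → Finset G) (f : G → ℂ) : ℝ :=
  (boxAvg H f).re ^ ((1 : ℝ) / 2 ^ ℓ)

/-- The Gowers box inner product `⟨(f_ω)_{ω∈{0,1}^ℓ}⟩_{H₁,…,H_ℓ}`. -/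
noncomputable def gowersBoxInner {G : Type*} [AddCommGroup G] [Fintype G]
    {ℓ : ℕ} (H : Fin ℓ → Finset G) (f : (Fin ℓ → Bool) → G → ℂ) : ℂ :=
  (∑ x : G, ∑ h ∈ Fintype.piFinset H, ∑ h' ∈ Fintype.piFinset H,
      ∏ ω : Fin ℓ → Bool,
        conjIter (Finset.univ.filter (fun i => ω i)).card
          (f ω (x + (∑ i : Fin ℓ, if ω i then h i - h' i else 0) + ∑ i : Fin ℓ, h' i))) /
    ((Fintype.card G : ℂ) * ((Fintype.piFinset H).card : ℂ) ^ 2)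

namespace GCS

lemma conjIter_add_two (n : ℕ) (z : ℂ) : conjIter (n + 2) z = conjIter n z := by
  simp [conjIter, Function.iterate_add_apply]

lemma conj_conjIter (n : ℕ) (z : ℂ) :
    (starRingEnd ℂ) (conjIter n z) = conjIter (n + 1) z := by
  simp [conjIter, Function.iterate_succ_apply']

set_option linter.unusedSectionVars false

variable {ℓ : ℕ}

def cnt (ω : Fin ℓ → Bool) : ℕ := (Finset.univ.filter (fun i => ω i)).card

lemma cnt_update_true {ω : Fin ℓ → Bool} {j : Fin ℓ} (h : ω j = false) :
    cnt (Function.update ω j true) = cnt ω + 1 := by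
  unfold cnt
  have : (Finset.univ.filter (fun i => (Function.update ω j true i : Bool)))
      = insert j (Finset.univ.filter (fun i => ω i)) := by
    ext i
    by_cases hij : i = j
    · subst hij; simp
    · simp [Function.update_of_ne hij, hij]
  rw [this, Finset.card_insert_of_notMem]
  simp [h]


variable {G : Type*} [AddCommGroup G] [Fintype G] {ℓ : ℕ}

open Finset

noncomputable def Ff (f : (Fin ℓ → Bool) → G → ℂ) (x : G) (a b : Fin ℓ → G)
    (ω : Fin ℓ → Bool) : ℂ :=
  conjIter (cnt ω) (f ω (x + ∑ i, cond (ω i) (a i) (b i)))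

noncomputable def S (H : Fin ℓ → Finset G) (f : (Fin ℓ → Bool) → G → ℂ) : ℂ :=
  ∑ x : G, ∑ a ∈ Fintype.piFinset H, ∑ b ∈ Fintype.piFinset H, ∏ ω, Ff f x a b ω

noncomputable def U (H : Fin ℓ → Finset G) (f : (Fin ℓ → Bool) → G → ℂ) (j : Fin ℓ)
    (x : G) (a b : Fin ℓ → G) : ℂ :=
  ∑ t ∈ H j, ∏ ω ∈ Finset.univ.filter (fun ω => ω j = true),
    Ff f x (Function.update a j t) b ω

noncomputable def V (H : Fin ℓ → Finset G) (f : (Fin ℓ → Bool) → G → ℂ) (j : Fin ℓ)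
    (x : G) (a b : Fin ℓ → G) : ℂ :=
  ∑ t ∈ H j, ∏ ω ∈ Finset.univ.filter (fun ω => ω j = false),
    Ff f x a (Function.update b j t) ω

lemma F_true_indep (f : (Fin ℓ → Bool) → G → ℂ) (x : G) (a b : Fin ℓ → G)
    {ω : Fin ℓ → Bool} {j : Fin ℓ} (hω : ω j = true) (t' : G) :
    Ff f x a (Function.update b j t') ω = Ff f x a b ω := by
  unfold Ff
  have : ∑ i, cond (ω i) (a i) (Function.update b j t' i)
      = ∑ i, cond (ω i) (a i) (b i) := by
    refine Finset.sum_congr rfl fun i _ => ?_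
    by_cases hij : i = j
    · subst hij; simp [hω]
    · rw [Function.update_of_ne hij]
  rw [this]

lemma F_false_indep (f : (Fin ℓ → Bool) → G → ℂ) (x : G) (a b : Fin ℓ → G)
    {ω : Fin ℓ → Bool} {j : Fin ℓ} (hω : ω j = false) (t : G) :
    Ff f x (Function.update a j t) b ω = Ff f x a b ω := by
  unfold Ff
  have : ∑ i, cond (ω i) (Function.update a j t i) (b i)
      = ∑ i, cond (ω i) (a i) (b i) := by
    refine Finset.sum_congr rfl fun i _ => ?_
    by_cases hij : i = j
    · subst hij; simp [hω]
    · rw [Function.update_of_ne hij]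
  rw [this]

lemma UV_eq (H : Fin ℓ → Finset G) (f : (Fin ℓ → Bool) → G → ℂ) (j : Fin ℓ)
    (x : G) (a b : Fin ℓ → G) :
    U H f j x a b * V H f j x a b
      = ∑ t ∈ H j, ∑ t' ∈ H j,
          ∏ ω, Ff f x (Function.update a j t) (Function.update b j t') ω := by
  unfold U V
  rw [Finset.sum_mul_sum]
  refine Finset.sum_congr rfl fun t _ => Finset.sum_congr rfl fun t' _ => ?_
  rw [← Finset.prod_filter_mul_prod_filter_not Finset.univ (fun ω => ω j = true)
    (Ff f x (Function.update a j t) (Function.update b j t'))]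
  congr 1
  · exact Finset.prod_congr rfl fun ω hω =>
      (F_true_indep f x (Function.update a j t) b (Finset.mem_filter.1 hω).2 t').symm
  · refine (Finset.prod_congr
      (Finset.filter_congr (fun ω _ => by simp [Bool.not_eq_true]))
      (fun ω hω => F_false_indep f x a (Function.update b j t')
        (Finset.mem_filter.1 hω).2 t)).symm

lemma sum_update' (H : Fin ℓ → Finset G) (j : Fin ℓ) (g : (Fin ℓ → G) → ℂ) :
    ∑ a ∈ Fintype.piFinset H, ∑ t ∈ H j, g (Function.update a j t)
      = (H j).card * ∑ a ∈ Fintype.piFinset H, g a := by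
  rw [← Finset.sum_product']
  have key : ∑ p ∈ Fintype.piFinset H ×ˢ H j, g (Function.update p.1 j p.2)
      = ∑ p ∈ Fintype.piFinset H ×ˢ H j, g p.1 := by
    apply Finset.sum_nbij' (i := fun p => (Function.update p.1 j p.2, p.1 j))
      (j := fun p => (Function.update p.1 j p.2, p.1 j))
    · rintro ⟨a, t⟩ hp
      simp only [Finset.mem_product, Fintype.mem_piFinset] at hp ⊢
      refine ⟨fun i => ?_, hp.1 j⟩
      by_cases hij : i = j
      · subst hij; simpa using hp.2
      · simpa [Function.update_of_ne hij] using hp.1 i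
    · rintro ⟨a, t⟩ hp
      simp only [Finset.mem_product, Fintype.mem_piFinset] at hp ⊢
      refine ⟨fun i => ?_, hp.1 j⟩
      by_cases hij : i = j
      · subst hij; simpa using hp.2
      · simpa [Function.update_of_ne hij] using hp.1 i
    · rintro ⟨a, t⟩ _
      simp [Function.update_idem]
    · rintro ⟨a, t⟩ _
      simp [Function.update_idem]
    · rintro ⟨a, t⟩ _
      simp
  rw [key, Finset.sum_product]
  simp only [Finset.sum_const, nsmul_eq_mul]
  rw [← Finset.mul_sum]


set_option maxHeartbeats 2000000 in
lemma key (H : Fin ℓ → Finset G) (f : (Fin ℓ → Bool) → G → ℂ) (j : Fin ℓ) :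
    (((H j).card : ℂ))^2 * S H f
      = ∑ x : G, ∑ a ∈ Fintype.piFinset H, ∑ b ∈ Fintype.piFinset H,
          U H f j x a b * V H f j x a b := by
  unfold S
  rw [Finset.mul_sum]
  refine Finset.sum_congr rfl fun x _ => ?_
  have step1 : ∀ a b : Fin ℓ → G, U H f j x a b * V H f j x a b
      = ∑ t ∈ H j, ∑ t' ∈ H j,
          ∏ ω, Ff f x (Function.update a j t) (Function.update b j t') ω :=
    fun a b => UV_eq H f j x a b
  simp_rw [step1]
  symm
  calc ∑ a ∈ Fintype.piFinset H, ∑ b ∈ Fintype.piFinset H, ∑ t ∈ H j, ∑ t' ∈ H j,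
        ∏ ω, Ff f x (Function.update a j t) (Function.update b j t') ω
      = ∑ a ∈ Fintype.piFinset H, ∑ t ∈ H j, ((H j).card : ℂ) *
          ∑ b ∈ Fintype.piFinset H, ∏ ω, Ff f x (Function.update a j t) b ω := by
        refine Finset.sum_congr rfl fun a _ => ?_
        rw [Finset.sum_comm]
        exact Finset.sum_congr rfl fun t _ =>
          sum_update' H j (fun b => ∏ ω, Ff f x (Function.update a j t) b ω)
    _ = ((H j).card : ℂ) * ∑ a ∈ Fintype.piFinset H, ∑ t ∈ H j,
          ∑ b ∈ Fintype.piFinset H, ∏ ω, Ff f x (Function.update a j t) b ω := by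
        rw [Finset.mul_sum]
        exact Finset.sum_congr rfl fun a _ => (Finset.mul_sum _ _ _).symm
    _ = ((H j).card : ℂ) * (((H j).card : ℂ) *
          ∑ a ∈ Fintype.piFinset H, ∑ b ∈ Fintype.piFinset H, ∏ ω, Ff f x a b ω) :=
        congrArg (fun y => ((H j).card : ℂ) * y)
          (sum_update' H j (fun a' => ∑ b ∈ Fintype.piFinset H, ∏ ω, Ff f x a' b ω))
    _ = ((H j).card : ℂ)^2 * ∑ a ∈ Fintype.piFinset H, ∑ b ∈ Fintype.piFinset H,
          ∏ ω, Ff f x a b ω := by ring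


lemma U_congr (H : Fin ℓ → Finset G) (f : (Fin ℓ → Bool) → G → ℂ) (j : Fin ℓ)
    (x : G) (a b : Fin ℓ → G) :
    U H (fun ω => f (Function.update ω j true)) j x a b = U H f j x a b := by
  unfold U
  refine Finset.sum_congr rfl fun t _ => Finset.prod_congr rfl fun ω hω => ?_
  have hωj : ω j = true := (Finset.mem_filter.1 hω).2
  unfold Ff
  beta_reduce
  rw [show Function.update ω j true = ω from by
    rw [show (true : Bool) = ω j from hωj.symm, Function.update_eq_self]]

lemma V_congr (H : Fin ℓ → Finset G) (f : (Fin ℓ → Bool) → G → ℂ) (j : Fin ℓ)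
    (x : G) (a b : Fin ℓ → G) :
    V H (fun ω => f (Function.update ω j false)) j x a b = V H f j x a b := by
  unfold V
  refine Finset.sum_congr rfl fun t _ => Finset.prod_congr rfl fun ω hω => ?_
  have hωj : ω j = false := (Finset.mem_filter.1 hω).2
  unfold Ff
  beta_reduce
  rw [show Function.update ω j false = ω from by
    rw [show (false : Bool) = ω j from hωj.symm, Function.update_eq_self]]

lemma conjU (H : Fin ℓ → Finset G) (f : (Fin ℓ → Bool) → G → ℂ) (j : Fin ℓ)
    (x : G) (a b : Fin ℓ → G) :
    (starRingEnd ℂ) (U H f j x a b)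
      = V H (fun ω => f (Function.update ω j true)) j x a b := by
  unfold U V
  rw [map_sum]
  refine Finset.sum_congr rfl fun t _ => ?_
  rw [map_prod]
  refine Finset.prod_nbij' (fun ω => Function.update ω j false)
    (fun ω => Function.update ω j true) ?_ ?_ ?_ ?_ ?_
  · intro ω hω; simp
  · intro ω hω; simp
  · intro ω hω
    have hωj : ω j = true := (Finset.mem_filter.1 hω).2
    beta_reduce
    rw [Function.update_idem, show (true : Bool) = ω j from hωj.symm,
      Function.update_eq_self]
  · intro ω hω
    have hωj : ω j = false := (Finset.mem_filter.1 hω).2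
    beta_reduce
    rw [Function.update_idem, show (false : Bool) = ω j from hωj.symm,
      Function.update_eq_self]
  · intro ω hω
    have hωj : ω j = true := (Finset.mem_filter.1 hω).2
    unfold Ff
    rw [conj_conjIter]
    beta_reduce
    have hfalse : Function.update ω j false j = false := by simp
    have hupd : Function.update (Function.update ω j false) j true = ω := by
      rw [Function.update_idem, show (true : Bool) = ω j from hωj.symm,
        Function.update_eq_self]
    have hcnt : cnt ω + 1 = cnt (Function.update ω j false) + 2 := by
      have := cnt_update_true (ω := Function.update ω j false) (j := j) hfalse
      rw [hupd] at this
      omega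
    have harg : (∑ i : Fin ℓ, cond (Function.update ω j false i) (a i) (Function.update b j t i))
        = ∑ i : Fin ℓ, cond (ω i) (Function.update a j t i) (b i) := by
      refine Finset.sum_congr rfl fun i _ => ?_
      by_cases hij : i = j
      · subst hij; simp [hωj]
      · simp [Function.update_of_ne hij]
    rw [hcnt, conjIter_add_two, hupd, harg]

lemma conjV (H : Fin ℓ → Finset G) (f : (Fin ℓ → Bool) → G → ℂ) (j : Fin ℓ)
    (x : G) (a b : Fin ℓ → G) :
    (starRingEnd ℂ) (V H f j x a b)
      = U H (fun ω => f (Function.update ω j false)) j x a b := by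
  unfold U V
  rw [map_sum]
  refine Finset.sum_congr rfl fun t _ => ?_
  rw [map_prod]
  refine Finset.prod_nbij' (fun ω => Function.update ω j true)
    (fun ω => Function.update ω j false) ?_ ?_ ?_ ?_ ?_
  · intro ω hω; simp
  · intro ω hω; simp
  · intro ω hω
    have hωj : ω j = false := (Finset.mem_filter.1 hω).2
    beta_reduce
    rw [Function.update_idem, show (false : Bool) = ω j from hωj.symm,
      Function.update_eq_self]
  · intro ω hω
    have hωj : ω j = true := (Finset.mem_filter.1 hω).2
    beta_reduce
    rw [Function.update_idem, show (true : Bool) = ω j from hωj.symm,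
      Function.update_eq_self]
  · intro ω hω
    have hωj : ω j = false := (Finset.mem_filter.1 hω).2
    unfold Ff
    rw [conj_conjIter]
    beta_reduce
    have hupd : Function.update (Function.update ω j true) j false = ω := by
      rw [Function.update_idem, show (false : Bool) = ω j from hωj.symm,
        Function.update_eq_self]
    have hcnt : cnt (Function.update ω j true) = cnt ω + 1 := cnt_update_true hωj
    have harg : (∑ i : Fin ℓ, cond (Function.update ω j true i) (Function.update a j t i) (b i))
        = ∑ i : Fin ℓ, cond (ω i) (a i) (Function.update b j t i) := by
      refine Finset.sum_congr rfl fun i _ => ?_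
      by_cases hij : i = j
      · subst hij; simp [hωj]
      · simp [Function.update_of_ne hij]
    rw [← hcnt, hupd, harg]


lemma sumUU (H : Fin ℓ → Finset G) (f : (Fin ℓ → Bool) → G → ℂ) (j : Fin ℓ) :
    ∑ x : G, ∑ a ∈ Fintype.piFinset H, ∑ b ∈ Fintype.piFinset H,
        U H f j x a b * (starRingEnd ℂ) (U H f j x a b)
      = (((H j).card : ℂ))^2 * S H (fun ω => f (Function.update ω j true)) := by
  rw [key H (fun ω => f (Function.update ω j true)) j]
  refine Finset.sum_congr rfl fun x _ => Finset.sum_congr rfl fun a _ =>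
    Finset.sum_congr rfl fun b _ => ?_
  rw [conjU, U_congr]

lemma sumVV (H : Fin ℓ → Finset G) (f : (Fin ℓ → Bool) → G → ℂ) (j : Fin ℓ) :
    ∑ x : G, ∑ a ∈ Fintype.piFinset H, ∑ b ∈ Fintype.piFinset H,
        V H f j x a b * (starRingEnd ℂ) (V H f j x a b)
      = (((H j).card : ℂ))^2 * S H (fun ω => f (Function.update ω j false)) := by
  rw [key H (fun ω => f (Function.update ω j false)) j]
  refine Finset.sum_congr rfl fun x _ => Finset.sum_congr rfl fun a _ =>
    Finset.sum_congr rfl fun b _ => ?_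
  rw [conjV, V_congr, mul_comm]

lemma tripleSum (H : Fin ℓ → Finset G) (g : G → (Fin ℓ → G) → (Fin ℓ → G) → ℂ) :
    ∑ x : G, ∑ a ∈ Fintype.piFinset H, ∑ b ∈ Fintype.piFinset H, g x a b
      = ∑ p ∈ (Finset.univ ×ˢ (Fintype.piFinset H ×ˢ Fintype.piFinset H)),
          g p.1 p.2.1 p.2.2 := by
  rw [Finset.sum_product]
  refine Finset.sum_congr rfl fun x _ => ?_
  rw [Finset.sum_product]


lemma sumUU' (H : Fin ℓ → Finset G) (f : (Fin ℓ → Bool) → G → ℂ) (j : Fin ℓ) :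
    ((∑ p ∈ (Finset.univ ×ˢ (Fintype.piFinset H ×ˢ Fintype.piFinset H)),
        ‖U H f j p.1 p.2.1 p.2.2‖ ^ 2 : ℝ) : ℂ)
      = (((H j).card : ℂ))^2 * S H (fun ω => f (Function.update ω j true)) := by
  rw [← sumUU H f j, tripleSum H]
  push_cast
  refine Finset.sum_congr rfl fun p _ => ?_
  rw [Complex.mul_conj, Complex.normSq_eq_norm_sq]
  push_cast
  ring

lemma sumVV' (H : Fin ℓ → Finset G) (f : (Fin ℓ → Bool) → G → ℂ) (j : Fin ℓ) :
    ((∑ p ∈ (Finset.univ ×ˢ (Fintype.piFinset H ×ˢ Fintype.piFinset H)),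
        ‖V H f j p.1 p.2.1 p.2.2‖ ^ 2 : ℝ) : ℂ)
      = (((H j).card : ℂ))^2 * S H (fun ω => f (Function.update ω j false)) := by
  rw [← sumVV H f j, tripleSum H]
  push_cast
  refine Finset.sum_congr rfl fun p _ => ?_
  rw [Complex.mul_conj, Complex.normSq_eq_norm_sq]
  push_cast
  ring

lemma cs_step (H : Fin ℓ → Finset G) (hH : ∀ i, (H i).Nonempty)
    (f : (Fin ℓ → Bool) → G → ℂ) (j : Fin ℓ) :
    ‖S H f‖ ^ 2
      ≤ ‖S H (fun ω => f (Function.update ω j true))‖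
        * ‖S H (fun ω => f (Function.update ω j false))‖ := by
  set c : ℝ := ((H j).card : ℝ) with hc
  have hcpos : 0 < c := by
    have := Finset.card_pos.2 (hH j)
    positivity
  set T := ((Finset.univ : Finset G) ×ˢ (Fintype.piFinset H ×ˢ Fintype.piFinset H)) with hT
  have hUU : ∑ p ∈ T, ‖U H f j p.1 p.2.1 p.2.2‖ ^ 2
      = c^2 * ‖S H (fun ω => f (Function.update ω j true))‖ := by
    have h1 := congrArg norm (sumUU' H f j)
    rw [Complex.norm_real, Real.norm_eq_abs, norm_mul, norm_pow, Complex.norm_natCast] at h1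
    rw [abs_of_nonneg (Finset.sum_nonneg fun p _ => by positivity)] at h1
    exact h1
  have hVV : ∑ p ∈ T, ‖V H f j p.1 p.2.1 p.2.2‖ ^ 2
      = c^2 * ‖S H (fun ω => f (Function.update ω j false))‖ := by
    have h1 := congrArg norm (sumVV' H f j)
    rw [Complex.norm_real, Real.norm_eq_abs, norm_mul, norm_pow, Complex.norm_natCast] at h1
    rw [abs_of_nonneg (Finset.sum_nonneg fun p _ => by positivity)] at h1
    exact h1
  have hkey : c^2 * ‖S H f‖
      = ‖∑ p ∈ T, U H f j p.1 p.2.1 p.2.2 * V H f j p.1 p.2.1 p.2.2‖ := by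
    have h1 := congrArg norm (key H f j)
    rw [norm_mul, norm_pow, Complex.norm_natCast, tripleSum H] at h1
    exact h1
  have habs : ‖∑ p ∈ T, U H f j p.1 p.2.1 p.2.2 * V H f j p.1 p.2.1 p.2.2‖
      ≤ ∑ p ∈ T, ‖U H f j p.1 p.2.1 p.2.2‖
          * ‖V H f j p.1 p.2.1 p.2.2‖ := by
    refine le_trans (norm_sum_le _ _) (le_of_eq ?_)
    exact Finset.sum_congr rfl fun p _ => norm_mul _ _
  have hCS := Finset.sum_mul_sq_le_sq_mul_sq T
    (fun p => ‖U H f j p.1 p.2.1 p.2.2‖)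
    (fun p => ‖V H f j p.1 p.2.1 p.2.2‖)
  have chain : (c^2 * ‖S H f‖)^2
      ≤ (c^2 * ‖S H (fun ω => f (Function.update ω j true))‖)
        * (c^2 * ‖S H (fun ω => f (Function.update ω j false))‖) := by
    rw [hkey, ← hUU, ← hVV]
    calc ‖∑ p ∈ T, U H f j p.1 p.2.1 p.2.2 * V H f j p.1 p.2.1 p.2.2‖ ^ 2
        ≤ (∑ p ∈ T, ‖U H f j p.1 p.2.1 p.2.2‖
            * ‖V H f j p.1 p.2.1 p.2.2‖) ^ 2 := by
          have h0 : (0:ℝ) ≤ ‖∑ p ∈ T, U H f j p.1 p.2.1 p.2.2 * V H f j p.1 p.2.1 p.2.2‖ :=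
            norm_nonneg _
          exact pow_le_pow_left₀ h0 habs 2
      _ ≤ _ := hCS
  have h4 : (0:ℝ) < c^4 := by positivity
  refine le_of_mul_le_mul_left ?_ h4
  calc c^4 * ‖S H f‖ ^ 2 = (c^2 * ‖S H f‖)^2 := by ring
    _ ≤ (c^2 * ‖S H (fun ω => f (Function.update ω j true))‖)
        * (c^2 * ‖S H (fun ω => f (Function.update ω j false))‖) := chain
    _ = c^4 * (‖S H (fun ω => f (Function.update ω j true))‖
        * ‖S H (fun ω => f (Function.update ω j false))‖) := by ring


lemma S_diag (hl : 1 ≤ ℓ) (H : Fin ℓ → Finset G) (hH : ∀ i, (H i).Nonempty) (g : G → ℂ) :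
    ∃ r : ℝ, 0 ≤ r ∧ S H (fun _ => g) = (r : ℂ) := by
  have j : Fin ℓ := ⟨0, hl⟩
  have h := sumUU' H (fun _ => g) j
  have hc0 : (0:ℝ) < ((H j).card : ℝ) := by
    exact_mod_cast Finset.card_pos.2 (hH j)
  have hc : (((H j).card : ℝ))^2 ≠ 0 := by positivity
  refine ⟨(∑ p ∈ ((Finset.univ : Finset G) ×ˢ (Fintype.piFinset H ×ˢ Fintype.piFinset H)),
      ‖U H (fun _ => g) j p.1 p.2.1 p.2.2‖ ^ 2) / ((H j).card : ℝ)^2,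
    by positivity, ?_⟩
  push_cast at h ⊢
  rw [eq_div_iff (by exact_mod_cast hc)]
  linear_combination -h


lemma iter_cs (H : Fin ℓ → Finset G) (hH : ∀ i, (H i).Nonempty) :
    ∀ m, m ≤ ℓ → ∀ f : (Fin ℓ → Bool) → G → ℂ,
      ‖S H f‖ ^ (2^m)
        ≤ ∏ θ : Fin m → Bool,
            ‖S H (fun ω => f (fun i =>
              if h : (i : ℕ) < m then θ ⟨i, h⟩ else ω i))‖ := by
  intro m
  induction m with
  | zero =>
    intro _ f
    rw [pow_zero, pow_one]
    rw [Fintype.prod_subsingleton _ (fun i => (i : Fin 0).elim0)]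
    have hfam : (fun ω => f (fun i => if h : (i : ℕ) < 0
        then (fun i' => (i' : Fin 0).elim0) ⟨i, h⟩ else ω i)) = f :=
      funext fun ω => congrArg f (funext fun i => dif_neg (Nat.not_lt_zero _))
    rw [hfam]
  | succ m IH =>
    intro hm f
    have hm' : m ≤ ℓ := le_trans (Nat.le_succ m) hm
    set j : Fin ℓ := ⟨m, hm⟩ with hj
    set gθ : (Fin m → Bool) → (Fin ℓ → Bool) → G → ℂ :=
      fun θ ω => f (fun i => if h : (i : ℕ) < m then θ ⟨i, h⟩ else ω i) with hgθ
    set A : (Fin (m+1) → Bool) → ℝ :=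
      fun θ => ‖S H (fun ω => f (fun i =>
        if h : (i : ℕ) < m + 1 then θ ⟨i, h⟩ else ω i))‖ with hA
    have key2 : ∀ (θ : Fin m → Bool) (c : Bool),
        (fun ω => gθ θ (Function.update ω j c))
          = (fun ω => f (fun i =>
              if h : (i : ℕ) < m + 1 then (Fin.snoc θ c : Fin (m+1) → Bool) ⟨i, h⟩ else ω i)) := by
      intro θ c
      funext ω
      refine congrArg f (funext fun i => ?_)
      by_cases h1 : (i : ℕ) < m
      · have h2 : (i : ℕ) < m + 1 := Nat.lt_succ_of_lt h1
        rw [dif_pos h1, dif_pos h2]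
        simp [Fin.snoc, h1]
      · by_cases h2 : (i : ℕ) = m
        · have hij : i = j := Fin.ext h2
          have h3 : (i : ℕ) < m + 1 := by omega
          rw [dif_neg h1, dif_pos h3]
          have hupd : Function.update ω j c i = c := by
            rw [hij]; exact Function.update_self _ _ _
          rw [hupd]
          simp [Fin.snoc, h2]
        · have h3 : ¬ (i : ℕ) < m + 1 := by omega
          have hij : i ≠ j := fun hcon => h2 (by rw [hcon])
          rw [dif_neg h1, dif_neg h3, Function.update_of_ne hij]
    calc ‖S H f‖ ^ (2^(m+1))
        = (‖S H f‖ ^ (2^m))^2 := by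
          rw [← pow_mul, pow_succ]
      _ ≤ (∏ θ : Fin m → Bool, ‖S H (gθ θ)‖)^2 :=
          pow_le_pow_left₀ (by positivity) (IH hm' f) 2
      _ = ∏ θ : Fin m → Bool, (‖S H (gθ θ)‖)^2 := by
          rw [← Finset.prod_pow]
      _ ≤ ∏ θ : Fin m → Bool,
            (‖S H (fun ω => gθ θ (Function.update ω j true))‖
              * ‖S H (fun ω => gθ θ (Function.update ω j false))‖) :=
          Finset.prod_le_prod (fun _ _ => by positivity)
            (fun θ _ => cs_step H hH (gθ θ) j)
      _ = ∏ θ : Fin m → Bool, (A (Fin.snoc θ true : Fin (m+1) → Bool) * A (Fin.snoc θ false : Fin (m+1) → Bool)) := by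
          refine Finset.prod_congr rfl fun θ _ => ?_
          rw [key2 θ true, key2 θ false]
      _ = (∏ θ : Fin m → Bool, A (Fin.snoc θ true : Fin (m+1) → Bool))
            * ∏ θ : Fin m → Bool, A (Fin.snoc θ false : Fin (m+1) → Bool) := Finset.prod_mul_distrib
      _ = ∏ p : Bool × (Fin m → Bool), A (Fin.snoc p.2 p.1 : Fin (m+1) → Bool) := by
          rw [Fintype.prod_prod_type, Fintype.prod_bool]
      _ = ∏ θ : Fin (m+1) → Bool, A θ :=
          Fintype.prod_equiv (Fin.snocEquiv (fun _ => Bool)) _ _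
            (fun p => congrArg A (funext fun i => rfl))


lemma boxDeriv_ofFn : ∀ (n : ℕ) (a b : Fin n → G) (g : G → ℂ) (x : G),
    boxDeriv (List.ofFn fun i => (a i, b i)) g x
      = ∏ ω : Fin n → Bool,
          conjIter ((Finset.univ.filter (fun i => ω i = false)).card)
            (g (x + ∑ i, cond (ω i) (a i) (b i))) := by
  intro n
  induction n with
  | zero =>
    intro a b g x
    rw [Fintype.prod_subsingleton _ (fun i => (i : Fin 0).elim0)]
    simp [boxDeriv, List.ofFn_zero, conjIter]
  | succ n IH =>
    intro a b g x
    rw [List.ofFn_succ]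
    show (starRingEnd ℂ) (boxDeriv _ g (x + b 0)) * boxDeriv _ g (x + a 0) = _
    rw [IH (fun i => a i.succ) (fun i => b i.succ) g (x + b 0),
      IH (fun i => a i.succ) (fun i => b i.succ) g (x + a 0), map_prod]
    have hre : ∀ F : (Fin (n+1) → Bool) → ℂ, (∏ ω, F ω)
        = (∏ ω' : Fin n → Bool, F (Fin.cons true ω'))
          * ∏ ω' : Fin n → Bool, F (Fin.cons false ω') := by
      intro F
      rw [← Fintype.prod_equiv (Fin.consEquiv (fun _ => Bool))
        (fun p => F (Fin.cons p.1 p.2)) F (fun p => rfl)]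
      rw [Fintype.prod_prod_type, Fintype.prod_bool]
    rw [hre]
    rw [mul_comm]
    congr 1
    · refine Finset.prod_congr rfl fun ω' _ => ?_
      have hc : (Finset.univ.filter
            (fun i => (Fin.cons true ω' : Fin (n+1) → Bool) i = false)).card
          = (Finset.univ.filter (fun i => ω' i = false)).card := by
        rw [Finset.card_filter, Finset.card_filter, Fin.sum_univ_succ]
        simp
      have harg : x + a 0 + ∑ i, cond (ω' i) (a i.succ) (b i.succ)
          = x + ∑ i, cond ((Fin.cons true ω' : Fin (n+1) → Bool) i) (a i) (b i) := by
        rw [Fin.sum_univ_succ]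
        simp [add_assoc]
      rw [hc, harg]
    · refine Finset.prod_congr rfl fun ω' _ => ?_
      rw [conj_conjIter]
      have hc : (Finset.univ.filter
            (fun i => (Fin.cons false ω' : Fin (n+1) → Bool) i = false)).card
          = (Finset.univ.filter (fun i => ω' i = false)).card + 1 := by
        rw [Finset.card_filter, Finset.card_filter, Fin.sum_univ_succ]
        simp [add_comm]
      have harg : x + b 0 + ∑ i, cond (ω' i) (a i.succ) (b i.succ)
          = x + ∑ i, cond ((Fin.cons false ω' : Fin (n+1) → Bool) i) (a i) (b i) := by
        rw [Fin.sum_univ_succ]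
        simp [add_assoc]
      rw [hc, harg]


set_option maxHeartbeats 1000000 in
lemma gowersBoxInner_eq (H : Fin ℓ → Finset G) (f : (Fin ℓ → Bool) → G → ℂ) :
    gowersBoxInner H f
      = S H f / ((Fintype.card G : ℂ) * ((Fintype.piFinset H).card : ℂ)^2) := by
  unfold gowersBoxInner S Ff cnt
  congr 1
  refine Finset.sum_congr rfl fun x _ => Finset.sum_congr rfl fun h _ =>
    Finset.sum_congr rfl fun h' _ => Finset.prod_congr rfl fun ω _ => ?_
  have harg : x + (∑ i, if ω i then h i - h' i else 0) + ∑ i, h' i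
      = x + ∑ i, cond (ω i) (h i) (h' i) := by
    rw [add_assoc, ← Finset.sum_add_distrib]
    congr 1
    refine Finset.sum_congr rfl fun i _ => ?_
    cases hb : ω i <;> simp [hb]
  rw [harg]

lemma boxAvg_eq (H : Fin ℓ → Finset G) (g : G → ℂ) :
    boxAvg H g
      = S H (fun _ => g)
          / ((Fintype.card G : ℂ) * ((Fintype.piFinset H).card : ℂ)^2) := by
  unfold boxAvg S Ff
  congr 1
  refine Finset.sum_congr rfl fun x _ => ?_
  calc ∑ h ∈ Fintype.piFinset H, ∑ h' ∈ Fintype.piFinset H,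
        boxDeriv (List.ofFn fun i => (h i, h' i)) g x
      = ∑ h ∈ Fintype.piFinset H, ∑ h' ∈ Fintype.piFinset H,
          ∏ ω : Fin ℓ → Bool, conjIter (cnt ω) (g (x + ∑ i, cond (ω i) (h' i) (h i))) := by
        refine Finset.sum_congr rfl fun h _ => Finset.sum_congr rfl fun h' _ => ?_
        rw [boxDeriv_ofFn]
        refine Fintype.prod_equiv
          (⟨fun ω i => !(ω i), fun ω i => !(ω i),
            fun ω => funext fun i => Bool.not_not _,
            fun ω => funext fun i => Bool.not_not _⟩ : (Fin ℓ → Bool) ≃ (Fin ℓ → Bool))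
          _ _ (fun ω => ?_)
        have h1 : cnt (fun i => !(ω i)) = (Finset.univ.filter (fun i => ω i = false)).card := by
          unfold cnt
          congr 1
          refine Finset.filter_congr fun i _ => ?_
          cases hb : ω i <;> simp [hb]
        have h2 : ∑ i, cond (ω i) (h i) (h' i) = ∑ i, cond (!(ω i)) (h' i) (h i) := by
          refine Finset.sum_congr rfl fun i _ => ?_
          cases hb : ω i <;> simp [hb]
        rw [h2, ← h1]
        rfl
    _ = ∑ a ∈ Fintype.piFinset H, ∑ b ∈ Fintype.piFinset H,
          ∏ ω : Fin ℓ → Bool, conjIter (cnt ω) (g (x + ∑ i, cond (ω i) (a i) (b i))) :=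
        Finset.sum_comm


end GCS

/-- Cauchy–Schwarz–Gowers inequality for box norms: the absolute value of the Gowers box
inner product of a family `(f_ω)_{ω ∈ {0,1}^ℓ}` is at most the product of the box norms
of the `f_ω`. -/
theorem gowers_cauchy_schwarz_box {G : Type*} [AddCommGroup G] [Fintype G]
    {ℓ : ℕ} (hℓ : 1 ≤ ℓ) (H : Fin ℓ → Finset G) (hH : ∀ i, (H i).Nonempty)
    (f : (Fin ℓ → Bool) → G → ℂ) :
    ‖gowersBoxInner H f‖ ≤ ∏ ω : Fin ℓ → Bool, boxNorm H (f ω) := by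
  classical
  set N : ℝ := (Fintype.card G : ℝ) * ((Fintype.piFinset H).card : ℝ)^2 with hNdef
  have hG : 0 < (Fintype.card G : ℝ) := by exact_mod_cast Fintype.card_pos
  have hPH : 0 < ((Fintype.piFinset H).card : ℝ) := by
    exact_mod_cast Finset.card_pos.2 (Fintype.piFinset_nonempty.2 hH)
  have hN : 0 < N := by positivity
  have hNC : ((Fintype.card G : ℂ) * ((Fintype.piFinset H).card : ℂ)^2) = (N : ℂ) := by
    rw [hNdef]; push_cast; ring
  have h1 : ‖gowersBoxInner H f‖ = ‖GCS.S H f‖ / N := by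
    rw [GCS.gowersBoxInner_eq, hNC, norm_div, Complex.norm_real, Real.norm_eq_abs, abs_of_pos hN]
  have hr : ∀ θ : Fin ℓ → Bool, ∃ r : ℝ, 0 ≤ r ∧ GCS.S H (fun _ => f θ) = (r : ℂ) :=
    fun θ => GCS.S_diag hℓ H hH (f θ)
  choose r hr0 hrS using hr
  have hbn : ∀ θ : Fin ℓ → Bool, boxNorm H (f θ) = (r θ / N) ^ ((1:ℝ)/2^ℓ) := by
    intro θ
    unfold boxNorm
    rw [GCS.boxAvg_eq, hNC, hrS θ, ← Complex.ofReal_div, Complex.ofReal_re]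
  have h2 : ‖GCS.S H f‖ ^ ((2:ℕ)^ℓ) ≤ ∏ θ : Fin ℓ → Bool, r θ := by
    refine le_trans (GCS.iter_cs H hH ℓ le_rfl f) ?_
    refine le_of_eq (Finset.prod_congr rfl fun θ _ => ?_)
    have hfam : (fun ω : Fin ℓ → Bool => f (fun i =>
        if h : (i : ℕ) < ℓ then θ ⟨i, h⟩ else ω i)) = (fun _ => f θ) := by
      funext ω
      refine congrArg f (funext fun i => ?_)
      rw [dif_pos i.isLt]
    rw [hfam, hrS θ, Complex.norm_real, Real.norm_eq_abs, abs_of_nonneg (hr0 θ)]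
  have hcard : Fintype.card (Fin ℓ → Bool) = 2^ℓ := by
    rw [Fintype.card_fun]
    simp
  rw [h1]
  calc ‖GCS.S H f‖ / N
      = ((‖GCS.S H f‖ / N) ^ ((2:ℕ)^ℓ)) ^ ((1:ℝ)/2^ℓ) := by
        rw [← Real.rpow_natCast (‖GCS.S H f‖ / N) (2^ℓ),
          ← Real.rpow_mul (by positivity)]
        rw [show (((2:ℕ)^ℓ : ℕ) : ℝ) * ((1:ℝ)/2^ℓ) = 1 by
          push_cast
          field_simp]
        rw [Real.rpow_one]
    _ ≤ ((∏ θ : Fin ℓ → Bool, r θ) / N ^ ((2:ℕ)^ℓ)) ^ ((1:ℝ)/2^ℓ) := by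
        refine Real.rpow_le_rpow (by positivity) ?_ (by positivity)
        rw [div_pow]
        exact div_le_div_of_nonneg_right h2 (by positivity) |>.trans_eq rfl
    _ = ∏ θ : Fin ℓ → Bool, (r θ / N) ^ ((1:ℝ)/2^ℓ) := by
        rw [Real.finset_prod_rpow Finset.univ (fun θ => r θ / N)
          (fun θ _ => div_nonneg (hr0 θ) hN.le) ((1:ℝ)/2^ℓ)]
        congr 1
        rw [Finset.prod_div_distrib, Finset.prod_const, Finset.card_univ, hcard]
    _ = ∏ θ : Fin ℓ → Bool, boxNorm H (f θ) :=
        Finset.prod_congr rfl fun θ _ => (hbn θ).symm
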